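/- Let n ≥ 1 and let U, V be 2^n × 2^n unitary matrices. Then C_LHST(U,V) = 0 if and only if there exists φ ∈ ℝ such that V = e^{iφ} U, i.e., the local Hilbert-Schmidt cost vanishes exactly when U and V agree up to a global phase. -/

import Mathlib

open Matrix Kronecker Complex

noncomputable section

/-- The Hilbert-Schmidt test cost `C_HST(U,V) = 1 - |Tr(V†U)|²/d²` for `d × d` matrices. -/
def CHSTd (d : ℕ) (U V : Matrix (Fin d) (Fin d) ℂ) : ℝ :=
  1 - ‖(Vᴴ * U).trace‖ ^ 2 / (d : ℝ) ^ 2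

/-- The Hilbert-Schmidt test cost for unitaries on `n` qubits (`d = 2^n`). -/
def CHST (n : ℕ) (U V : Matrix (Fin n → Fin 2) (Fin n → Fin 2) ℂ) : ℝ :=
  1 - ‖(Vᴴ * U).trace‖ ^ 2 / ((2 : ℝ) ^ n) ^ 2

/-- The local channel `E_j(ρ) = Tr_{j̄}[ W (ρ_(j) ⊗ I/2^(n-1)) W† ]`, where `ρ` is placed on
qubit `j`, the maximally mixed state on the other qubits, and the partial trace is over all
qubits except `j`.  (The sum over `r` double-counts the assignments of the qubits other than
`j`, whence the extra factor `1/2`.) -/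
def Ej (n : ℕ) (j : Fin n) (W : Matrix (Fin n → Fin 2) (Fin n → Fin 2) ℂ)
    (ρ : Matrix (Fin 2) (Fin 2) ℂ) : Matrix (Fin 2) (Fin 2) ℂ :=
  Matrix.of fun a b =>
    (1 / 2 ^ (n - 1) : ℂ) * (1 / 2) *
      ∑ r : Fin n → Fin 2, ∑ s : Fin n → Fin 2, ∑ t : Fin n → Fin 2,
        (if Function.update s j 0 = Function.update t j 0 then
          W (Function.update r j a) s * ρ (s j) (t j) * star (W (Function.update r j b) t)
        else 0)

/-- The two-qubit maximally entangled state `|Φ₂⁺⟩ = (|00⟩+|11⟩)/√2`. -/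
def phi2 : (Fin 2 × Fin 2) → ℂ := fun p => if p.1 = p.2 then ((1 / Real.sqrt 2 : ℝ) : ℂ) else 0

/-- The projector `|Φ₂⁺⟩⟨Φ₂⁺|`. -/
def phi2Proj : Matrix (Fin 2 × Fin 2) (Fin 2 × Fin 2) ℂ :=
  Matrix.of fun p q => if p.1 = p.2 ∧ q.1 = q.2 then (1 / 2 : ℂ) else 0

/-- `(E ⊗ id)(ρ)` for a map `E` on one-qubit matrices and a two-qubit matrix `ρ`. -/
def tensorId (E : Matrix (Fin 2) (Fin 2) ℂ → Matrix (Fin 2) (Fin 2) ℂ)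
    (ρ : Matrix (Fin 2 × Fin 2) (Fin 2 × Fin 2) ℂ) :
    Matrix (Fin 2 × Fin 2) (Fin 2 × Fin 2) ℂ :=
  Matrix.of fun p q => ∑ a : Fin 2, ∑ b : Fin 2,
    ρ (a, p.2) (b, q.2) * E (Matrix.single a b 1) p.1 q.1

/-- The entanglement fidelity `F_e^(j) = ⟨Φ₂⁺|(E_j ⊗ id)(|Φ₂⁺⟩⟨Φ₂⁺|)|Φ₂⁺⟩`
(as a complex number), with `W = U V†`. -/
def FeC (n : ℕ) (j : Fin n) (U V : Matrix (Fin n → Fin 2) (Fin n → Fin 2) ℂ) : ℂ :=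
  star phi2 ⬝ᵥ (tensorId (Ej n j (U * Vᴴ)) phi2Proj).mulVec phi2

/-- The entanglement fidelity `F_e^(j)` (a real number). -/
def Fe (n : ℕ) (j : Fin n) (U V : Matrix (Fin n → Fin 2) (Fin n → Fin 2) ℂ) : ℝ :=
  (FeC n j U V).re

/-- The local Hilbert-Schmidt cost for qubit `j`: `C_LHST^(j)(U,V) = 1 - F_e^(j)`. -/
def CLHSTj (n : ℕ) (j : Fin n) (U V : Matrix (Fin n → Fin 2) (Fin n → Fin 2) ℂ) : ℝ :=
  1 - Fe n j U V

/-- The local Hilbert-Schmidt cost `C_LHST(U,V) = (1/n) Σ_j C_LHST^(j)(U,V)`. -/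
def CLHST (n : ℕ) (U V : Matrix (Fin n → Fin 2) (Fin n → Fin 2) ℂ) : ℝ :=
  (1 / n : ℝ) * ∑ j : Fin n, CLHSTj n j U V

end

noncomputable section

variable {n : ℕ} {M : Type*} [AddCommMonoid M]

/-- helper equiv: (a, r) ↦ (update r j a, r j) -/
def updEquiv (n : ℕ) (j : Fin n) : Fin 2 × (Fin n → Fin 2) ≃ (Fin n → Fin 2) × Fin 2 where
  toFun p := (Function.update p.2 j p.1, p.2 j)
  invFun q := (q.1 j, Function.update q.1 j q.2)
  left_inv := by rintro ⟨a, r⟩; simp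
  right_inv := by rintro ⟨u, c⟩; simp [Function.update_idem]

lemma L1 (j : Fin n) (s : Fin n → Fin 2) (g : (Fin n → Fin 2) → M) :
    ∑ t : Fin n → Fin 2, (if Function.update s j 0 = Function.update t j 0 then g t else 0)
      = g (Function.update s j 0) + g (Function.update s j 1) := by
  rw [← Finset.sum_filter]
  have h2 : ∀ c : Fin 2, c = 0 ∨ c = 1 := by decide
  have hset : (Finset.univ.filter (fun t => Function.update s j 0 = Function.update t j 0))
      = {Function.update s j 0, Function.update s j 1} := by
    ext t
    simp only [Finset.mem_filter, Finset.mem_univ, true_and, Finset.mem_insert,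
      Finset.mem_singleton]
    constructor
    · intro h
      have ht : t = Function.update s j (t j) := by
        funext i
        by_cases hi : i = j
        · subst hi; simp
        · have := congrFun h i
          simp [Function.update_of_ne hi] at this
          simp [Function.update_of_ne hi, this]
      rcases h2 (t j) with h0 | h0 <;> rw [h0] at ht
      · exact Or.inl ht
      · exact Or.inr ht
    · rintro (rfl | rfl) <;> simp [Function.update_idem]
  rw [hset, Finset.sum_pair]
  intro h
  have := congrFun h j
  simp at this

lemma L3 (j : Fin n) (a : Fin 2) (g : (Fin n → Fin 2) → M) :
    ∑ r : Fin n → Fin 2, g (Function.update r j a)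
      = ∑ u : Fin n → Fin 2, (if u j = a then g u + g u else 0) := by
  have key := Equiv.sum_comp (updEquiv n j)
    (fun q : (Fin n → Fin 2) × Fin 2 => if q.1 j = a then g q.1 else 0)
  simp only [updEquiv, Equiv.coe_fn_mk] at key
  rw [Fintype.sum_prod_type] at key
  simp only [Function.update_self] at key
  rw [Fin.sum_univ_two] at key
  -- key : (∑ r, if 0 = a then ...) + (∑ r, if 1 = a then ...) = ∑ q over product
  have h2 : ∀ c : Fin 2, c = 0 ∨ c = 1 := by decide
  rcases h2 a with rfl | rfl
  · simp only [if_pos rfl, if_neg (by decide : ¬ (1:Fin 2) = 0), Finset.sum_const_zero,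
      add_zero, if_true] at key
    rw [key, Fintype.sum_prod_type]
    simp only [Fin.sum_univ_two]
    apply Finset.sum_congr rfl
    intro u _
    by_cases h : u j = 0 <;> simp [h]
  · simp only [if_pos rfl, if_neg (by decide : ¬ (0:Fin 2) = 1), Finset.sum_const_zero,
      zero_add, if_true] at key
    rw [key, Fintype.sum_prod_type]
    simp only [Fin.sum_univ_two]
    apply Finset.sum_congr rfl
    intro u _
    by_cases h : u j = 1 <;> simp [h]

lemma L2 (j : Fin n) (g : (Fin n → Fin 2) → M) :
    (∑ r : Fin n → Fin 2, g (Function.update r j 0))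
      + (∑ r : Fin n → Fin 2, g (Function.update r j 1))
      = ∑ u : Fin n → Fin 2, (g u + g u) := by
  rw [L3 j 0 g, L3 j 1 g, ← Finset.sum_add_distrib]
  apply Finset.sum_congr rfl
  intro u _
  have h2 : ∀ c : Fin 2, c = 0 ∨ c = 1 := by decide
  rcases h2 (u j) with h | h <;> simp [h]

lemma Ej_std (hn : 1 ≤ n) (j : Fin n) (a b : Fin 2)
    (W : Matrix (Fin n → Fin 2) (Fin n → Fin 2) ℂ) :
    Ej n j W (Matrix.single a b 1) a b
      = (1 / 2 ^ (n + 1) : ℂ) * ∑ r : Fin n → Fin 2, ∑ s : Fin n → Fin 2,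
          W (Function.update r j a) (Function.update s j a)
            * star (W (Function.update r j b) (Function.update s j b)) := by
  unfold Ej
  rw [Matrix.of_apply]
  have hstep : ∀ r : Fin n → Fin 2,
      (∑ s : Fin n → Fin 2, ∑ t : Fin n → Fin 2,
        (if Function.update s j 0 = Function.update t j 0 then
          W (Function.update r j a) s * (Matrix.single a b 1) (s j) (t j)
            * star (W (Function.update r j b) t)
        else 0))
      = (1/2 : ℂ) * ∑ s : Fin n → Fin 2, W (Function.update r j a) (Function.update s j a)
            * star (W (Function.update r j b) (Function.update s j b)) := by
    intro r
    have h1 : ∀ s : Fin n → Fin 2,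
        (∑ t : Fin n → Fin 2,
          (if Function.update s j 0 = Function.update t j 0 then
            W (Function.update r j a) s * (Matrix.single a b 1) (s j) (t j)
              * star (W (Function.update r j b) t)
          else 0))
        = if s j = a then W (Function.update r j a) s
            * star (W (Function.update r j b) (Function.update s j b)) else 0 := by
      intro s
      rw [L1 j s (fun t => W (Function.update r j a) s
        * (Matrix.single a b 1) (s j) (t j) * star (W (Function.update r j b) t))]
      have h2 : ∀ c : Fin 2, c = 0 ∨ c = 1 := by decide
      simp only [Function.update_self, Matrix.single, Matrix.of_apply]
      rcases h2 b with rfl | rfl <;> rcases h2 (s j) with hsj | hsj <;>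
        rcases h2 a with rfl | rfl <;>
        simp [hsj, Function.update_idem]
    calc (∑ s : Fin n → Fin 2, ∑ t : Fin n → Fin 2,
        (if Function.update s j 0 = Function.update t j 0 then
          W (Function.update r j a) s * (Matrix.single a b 1) (s j) (t j)
            * star (W (Function.update r j b) t)
        else 0))
        = ∑ s : Fin n → Fin 2, (if s j = a then W (Function.update r j a) s
            * star (W (Function.update r j b) (Function.update s j b)) else 0) :=
          Finset.sum_congr rfl (fun s _ => h1 s)
      _ = (1/2 : ℂ) * ∑ s : Fin n → Fin 2, W (Function.update r j a) (Function.update s j a)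
            * star (W (Function.update r j b) (Function.update s j b)) := by
          have h3 := L3 j a (fun s => W (Function.update r j a) s
            * star (W (Function.update r j b) (Function.update s j b)))
          simp only [Function.update_idem] at h3
          have h4 : ∀ s : Fin n → Fin 2,
              (if s j = a then W (Function.update r j a) s
                * star (W (Function.update r j b) (Function.update s j b)) else 0)
              = (1/2 : ℂ) * (if s j = a then W (Function.update r j a) s
                * star (W (Function.update r j b) (Function.update s j b))
                + W (Function.update r j a) s
                * star (W (Function.update r j b) (Function.update s j b)) else 0) := by
            intro s
            by_cases h : s j = a
            · simp only [if_pos h]; ring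
            · simp [h]
          rw [Finset.sum_congr rfl (fun s _ => h4 s), ← Finset.mul_sum, ← h3]
  rw [Finset.sum_congr rfl (fun r _ => hstep r), ← Finset.mul_sum]
  have hpow : (1 / 2 ^ (n - 1) * (1 / 2) * (1 / 2) : ℂ) = 1 / 2 ^ (n + 1) := by
    rw [show n + 1 = (n - 1) + 2 by omega, pow_add]
    norm_num
    ring
  rw [← mul_assoc, hpow]

lemma feC_expand (j : Fin n) (U V : Matrix (Fin n → Fin 2) (Fin n → Fin 2) ℂ) :
    FeC n j U V = (1/4 : ℂ) * ∑ a : Fin 2, ∑ b : Fin 2,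
      Ej n j (U * Vᴴ) (Matrix.single a b 1) a b := by
  unfold FeC tensorId phi2 phi2Proj
  simp only [dotProduct, Matrix.mulVec, Matrix.of_apply, Pi.star_apply,
    Fintype.sum_prod_type, Fin.sum_univ_two]
  norm_num
  have hs : (Real.sqrt 2 : ℂ) ≠ 0 := by
    simp [Real.sqrt_eq_zero']
  have hs2 : (Real.sqrt 2 : ℂ) * (Real.sqrt 2 : ℂ) = 2 := by
    rw [← Complex.ofReal_mul]
    norm_num [Real.mul_self_sqrt]
  field_simp
  ring_nf
  rw [sq, hs2]
  norm_num
  ring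

/-- `T_j(r,s) = ∑_a W(r[j:=a], s[j:=a])`. -/
def Tj (n : ℕ) (j : Fin n) (W : Matrix (Fin n → Fin 2) (Fin n → Fin 2) ℂ)
    (r s : Fin n → Fin 2) : ℂ :=
  ∑ a : Fin 2, W (Function.update r j a) (Function.update s j a)

lemma feC_eq (hn : 1 ≤ n) (j : Fin n) (U V : Matrix (Fin n → Fin 2) (Fin n → Fin 2) ℂ) :
    FeC n j U V = (1 / 2 ^ (n + 3) : ℂ) * ∑ r : Fin n → Fin 2, ∑ s : Fin n → Fin 2,
      Tj n j (U * Vᴴ) r s * star (Tj n j (U * Vᴴ) r s) := by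
  set W := U * Vᴴ with hW
  have hcomm : ∀ (F : Fin 2 → (Fin n → Fin 2) → (Fin n → Fin 2) → ℂ),
      (∑ a : Fin 2, ∑ r : Fin n → Fin 2, ∑ s : Fin n → Fin 2, F a r s)
        = ∑ r : Fin n → Fin 2, ∑ s : Fin n → Fin 2, ∑ a : Fin 2, F a r s := by
    intro F
    rw [Finset.sum_comm]
    exact Finset.sum_congr rfl fun r _ => Finset.sum_comm
  have h2 : ∀ r s : Fin n → Fin 2,
      Tj n j W r s * star (Tj n j W r s)
      = ∑ a : Fin 2, ∑ b : Fin 2, W (Function.update r j a) (Function.update s j a)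
          * star (W (Function.update r j b) (Function.update s j b)) := by
    intro r s
    unfold Tj
    rw [star_sum, Finset.sum_mul_sum]
  have hswap : ∑ a : Fin 2, ∑ b : Fin 2, ∑ r : Fin n → Fin 2, ∑ s : Fin n → Fin 2,
        W (Function.update r j a) (Function.update s j a)
          * star (W (Function.update r j b) (Function.update s j b))
      = ∑ r : Fin n → Fin 2, ∑ s : Fin n → Fin 2,
          Tj n j W r s * star (Tj n j W r s) := by
    calc ∑ a : Fin 2, ∑ b : Fin 2, ∑ r : Fin n → Fin 2, ∑ s : Fin n → Fin 2,
        W (Function.update r j a) (Function.update s j a)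
          * star (W (Function.update r j b) (Function.update s j b))
        = ∑ a : Fin 2, ∑ r : Fin n → Fin 2, ∑ s : Fin n → Fin 2, ∑ b : Fin 2,
            W (Function.update r j a) (Function.update s j a)
              * star (W (Function.update r j b) (Function.update s j b)) :=
          Finset.sum_congr rfl fun a _ => hcomm _
      _ = ∑ r : Fin n → Fin 2, ∑ s : Fin n → Fin 2, ∑ a : Fin 2, ∑ b : Fin 2,
            W (Function.update r j a) (Function.update s j a)
              * star (W (Function.update r j b) (Function.update s j b)) := hcomm _
      _ = ∑ r : Fin n → Fin 2, ∑ s : Fin n → Fin 2,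
            Tj n j W r s * star (Tj n j W r s) :=
          Finset.sum_congr rfl fun r _ => Finset.sum_congr rfl fun s _ => (h2 r s).symm
  rw [feC_expand]
  rw [Finset.sum_congr rfl (fun a (_ : a ∈ Finset.univ) => Finset.sum_congr rfl
    (fun b (_ : b ∈ Finset.univ) => Ej_std hn j a b W))]
  simp only [← Finset.mul_sum]
  rw [hswap, ← mul_assoc]
  congr 1
  rw [show n + 3 = (n + 1) + 2 by omega, pow_add]
  norm_num
  ring

lemma fe_eq (hn : 1 ≤ n) (j : Fin n) (U V : Matrix (Fin n → Fin 2) (Fin n → Fin 2) ℂ) :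
    Fe n j U V = (1 / 2 ^ (n + 3) : ℝ) * ∑ r : Fin n → Fin 2, ∑ s : Fin n → Fin 2,
      Complex.normSq (Tj n j (U * Vᴴ) r s) := by
  have h := feC_eq hn j U V
  have h2 : ∀ r s : Fin n → Fin 2, Tj n j (U * Vᴴ) r s * star (Tj n j (U * Vᴴ) r s)
      = ((Complex.normSq (Tj n j (U * Vᴴ) r s) : ℝ) : ℂ) := fun r s => Complex.mul_conj _
  rw [Finset.sum_congr rfl (fun r (_ : r ∈ Finset.univ) => Finset.sum_congr rfl
    (fun s (_ : s ∈ Finset.univ) => h2 r s))] at h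
  unfold Fe
  rw [h]
  have h3 : (1 / 2 ^ (n + 3) : ℂ) * ∑ r : Fin n → Fin 2, ∑ s : Fin n → Fin 2,
        ((Complex.normSq (Tj n j (U * Vᴴ) r s) : ℝ) : ℂ)
      = (((1 / 2 ^ (n + 3) : ℝ) * ∑ r : Fin n → Fin 2, ∑ s : Fin n → Fin 2,
          Complex.normSq (Tj n j (U * Vᴴ) r s) : ℝ) : ℂ) := by
    push_cast
    ring
  rw [h3, Complex.ofReal_re]

lemma nsq_add_le (x y : ℂ) : Complex.normSq (x + y) ≤ 2 * (Complex.normSq x + Complex.normSq y) := by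
  simp only [Complex.normSq_apply, Complex.add_re, Complex.add_im]
  nlinarith [sq_nonneg (x.re - y.re), sq_nonneg (x.im - y.im)]

lemma eq_of_nsq (x y : ℂ) (hx : Complex.normSq x = 1) (hy : Complex.normSq y = 1)
    (hxy : Complex.normSq (x + y) = 4) : x = y := by
  simp only [Complex.normSq_apply, Complex.add_re, Complex.add_im] at hx hy hxy
  apply Complex.ext
  · nlinarith [sq_nonneg (x.re - y.re), sq_nonneg (x.im - y.im)]
  · nlinarith [sq_nonneg (x.re - y.re), sq_nonneg (x.im - y.im)]

lemma mass_eq (W : Matrix (Fin n → Fin 2) (Fin n → Fin 2) ℂ)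
    (hW : W ∈ Matrix.unitaryGroup (Fin n → Fin 2) ℂ) :
    ∑ u : Fin n → Fin 2, ∑ v : Fin n → Fin 2, Complex.normSq (W u v) = 2 ^ n := by
  have h1 : W * Wᴴ = 1 := Matrix.mem_unitaryGroup_iff.mp hW
  have h2 : ∀ u : Fin n → Fin 2, ∑ v : Fin n → Fin 2, Complex.normSq (W u v) = 1 := by
    intro u
    have := congrFun (congrFun h1 u) u
    rw [Matrix.mul_apply, Matrix.one_apply_eq] at this
    have h3 : ∀ v : Fin n → Fin 2, W u v * Wᴴ v u = ((Complex.normSq (W u v) : ℝ) : ℂ) := by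
      intro v
      rw [Matrix.conjTranspose_apply]
      exact Complex.mul_conj _
    rw [Finset.sum_congr rfl (fun v (_ : v ∈ Finset.univ) => h3 v)] at this
    have h4 : ((∑ v : Fin n → Fin 2, Complex.normSq (W u v) : ℝ) : ℂ) = ((1:ℝ):ℂ) := by
      push_cast
      rw [← this]
    exact_mod_cast h4
  rw [Finset.sum_congr rfl (fun u (_ : u ∈ Finset.univ) => h2 u)]
  simp [Finset.card_univ]

lemma qsum (j : Fin n) (W : Matrix (Fin n → Fin 2) (Fin n → Fin 2) ℂ) :
    ∑ a : Fin 2, ∑ b : Fin 2, ∑ r : Fin n → Fin 2, ∑ s : Fin n → Fin 2,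
        Complex.normSq (W (Function.update r j a) (Function.update s j b))
      = 4 * ∑ u : Fin n → Fin 2, ∑ v : Fin n → Fin 2, Complex.normSq (W u v) := by
  have hb : ∀ (u : Fin n → Fin 2), ∑ b : Fin 2, ∑ s : Fin n → Fin 2,
      Complex.normSq (W u (Function.update s j b))
      = 2 * ∑ v : Fin n → Fin 2, Complex.normSq (W u v) := by
    intro u
    rw [Fin.sum_univ_two, L2 j (fun v => Complex.normSq (W u v)), Finset.mul_sum]
    exact Finset.sum_congr rfl fun v _ => (two_mul _).symm
  have ha : ∀ (g : (Fin n → Fin 2) → ℝ), ∑ a : Fin 2, ∑ r : Fin n → Fin 2,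
      g (Function.update r j a) = 2 * ∑ u : Fin n → Fin 2, g u := by
    intro g
    rw [Fin.sum_univ_two, L2 j g, Finset.mul_sum]
    exact Finset.sum_congr rfl fun v _ => (two_mul _).symm
  calc ∑ a : Fin 2, ∑ b : Fin 2, ∑ r : Fin n → Fin 2, ∑ s : Fin n → Fin 2,
        Complex.normSq (W (Function.update r j a) (Function.update s j b))
      = ∑ a : Fin 2, ∑ r : Fin n → Fin 2, ∑ b : Fin 2, ∑ s : Fin n → Fin 2,
        Complex.normSq (W (Function.update r j a) (Function.update s j b)) :=
        Finset.sum_congr rfl fun a _ => Finset.sum_comm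
    _ = ∑ a : Fin 2, ∑ r : Fin n → Fin 2,
          2 * ∑ v : Fin n → Fin 2, Complex.normSq (W (Function.update r j a) v) :=
        Finset.sum_congr rfl fun a _ => Finset.sum_congr rfl fun r _ => hb _
    _ = 2 * ∑ u : Fin n → Fin 2, 2 * ∑ v : Fin n → Fin 2, Complex.normSq (W u v) :=
        ha (fun u => 2 * ∑ v : Fin n → Fin 2, Complex.normSq (W u v))
    _ = 4 * ∑ u : Fin n → Fin 2, ∑ v : Fin n → Fin 2, Complex.normSq (W u v) := by
        rw [← Finset.mul_sum]
        ring

lemma tbound (j : Fin n) (W : Matrix (Fin n → Fin 2) (Fin n → Fin 2) ℂ)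
    (hW : W ∈ Matrix.unitaryGroup (Fin n → Fin 2) ℂ) :
    (∑ r : Fin n → Fin 2, ∑ s : Fin n → Fin 2, Complex.normSq (Tj n j W r s)) ≤ 2 ^ (n + 3)
    ∧ ((∑ r : Fin n → Fin 2, ∑ s : Fin n → Fin 2, Complex.normSq (Tj n j W r s)) = 2 ^ (n + 3)
        → ∀ u v : Fin n → Fin 2, u j ≠ v j → W u v = 0) := by
  set Q : Fin 2 → Fin 2 → ℝ := fun a b => ∑ r : Fin n → Fin 2, ∑ s : Fin n → Fin 2,
    Complex.normSq (W (Function.update r j a) (Function.update s j b)) with hQ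
  have hqsum : Q 0 0 + Q 0 1 + (Q 1 0 + Q 1 1) = 4 * 2 ^ n := by
    have := qsum j W
    rw [mass_eq W hW] at this
    rw [Fin.sum_univ_two] at this
    simp only [Fin.sum_univ_two] at this
    rw [hQ]
    linarith
  have hnn : ∀ a b : Fin 2, 0 ≤ Q a b :=
    fun a b => Finset.sum_nonneg fun r _ => Finset.sum_nonneg fun s _ => Complex.normSq_nonneg _
  have hle : (∑ r : Fin n → Fin 2, ∑ s : Fin n → Fin 2, Complex.normSq (Tj n j W r s))
      ≤ 2 * (Q 0 0 + Q 1 1) := by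
    have h1 : ∀ r s : Fin n → Fin 2, Complex.normSq (Tj n j W r s)
        ≤ 2 * (Complex.normSq (W (Function.update r j 0) (Function.update s j 0))
          + Complex.normSq (W (Function.update r j 1) (Function.update s j 1))) := by
      intro r s
      unfold Tj
      rw [Fin.sum_univ_two]
      exact nsq_add_le _ _
    calc (∑ r : Fin n → Fin 2, ∑ s : Fin n → Fin 2, Complex.normSq (Tj n j W r s))
        ≤ ∑ r : Fin n → Fin 2, ∑ s : Fin n → Fin 2,
            2 * (Complex.normSq (W (Function.update r j 0) (Function.update s j 0))
              + Complex.normSq (W (Function.update r j 1) (Function.update s j 1))) :=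
          Finset.sum_le_sum fun r _ => Finset.sum_le_sum fun s _ => h1 r s
      _ = 2 * (Q 0 0 + Q 1 1) := by
          rw [hQ]
          simp only [Finset.mul_sum, ← Finset.sum_add_distrib]
  have hpow : (2:ℝ) ^ (n + 3) = 8 * 2 ^ n := by rw [pow_add]; ring
  constructor
  · linarith [hnn 0 1, hnn 1 0]
  · intro heq u v huv
    have h01 : Q 0 1 = 0 := by linarith [hnn 0 1, hnn 1 0]
    have h10 : Q 1 0 = 0 := by linarith [hnn 0 1, hnn 1 0]
    have hzero : ∀ a b : Fin 2, Q a b = 0 → ∀ u v : Fin n → Fin 2,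
        u j = a → v j = b → W u v = 0 := by
      intro a b hab u v hua hvb
      have h1 : ∀ r ∈ (Finset.univ : Finset (Fin n → Fin 2)),
          (0:ℝ) ≤ ∑ s : Fin n → Fin 2,
            Complex.normSq (W (Function.update r j a) (Function.update s j b)) :=
        fun r _ => Finset.sum_nonneg fun s _ => Complex.normSq_nonneg _
      have h2 := (Finset.sum_eq_zero_iff_of_nonneg h1).mp hab u (Finset.mem_univ u)
      have h3 := (Finset.sum_eq_zero_iff_of_nonneg
        (fun s _ => Complex.normSq_nonneg _)).mp h2 v (Finset.mem_univ v)
      rw [← hua, Function.update_eq_self, ← hvb, Function.update_eq_self] at h3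
      exact Complex.normSq_eq_zero.mp h3
    have h2 : ∀ c : Fin 2, c = 0 ∨ c = 1 := by decide
    rcases h2 (u j) with hu0 | hu0 <;> rcases h2 (v j) with hv0 | hv0
    · exact absurd (hu0.trans hv0.symm) huv
    · exact hzero 0 1 h01 u v hu0 hv0
    · exact hzero 1 0 h10 u v hu0 hv0
    · exact absurd (hu0.trans hv0.symm) huv

lemma row_one (W : Matrix (Fin n → Fin 2) (Fin n → Fin 2) ℂ)
    (hW : W ∈ Matrix.unitaryGroup (Fin n → Fin 2) ℂ) (u : Fin n → Fin 2) :
    ∑ v : Fin n → Fin 2, Complex.normSq (W u v) = 1 := by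
  have h1 : W * Wᴴ = 1 := Matrix.mem_unitaryGroup_iff.mp hW
  have := congrFun (congrFun h1 u) u
  rw [Matrix.mul_apply, Matrix.one_apply_eq] at this
  have h3 : ∀ v : Fin n → Fin 2, W u v * Wᴴ v u = ((Complex.normSq (W u v) : ℝ) : ℂ) := by
    intro v
    rw [Matrix.conjTranspose_apply]
    exact Complex.mul_conj _
  rw [Finset.sum_congr rfl (fun v (_ : v ∈ Finset.univ) => h3 v)] at this
  have h4 : ((∑ v : Fin n → Fin 2, Complex.normSq (W u v) : ℝ) : ℂ) = ((1:ℝ):ℂ) := by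
    push_cast
    rw [← this]
  exact_mod_cast h4

lemma diag_one (W : Matrix (Fin n → Fin 2) (Fin n → Fin 2) ℂ)
    (hW : W ∈ Matrix.unitaryGroup (Fin n → Fin 2) ℂ)
    (hdiag : ∀ u v : Fin n → Fin 2, u ≠ v → W u v = 0) (u : Fin n → Fin 2) :
    Complex.normSq (W u u) = 1 := by
  have h := row_one W hW u
  rw [Finset.sum_eq_single u (fun v _ hv => by rw [hdiag u v (Ne.symm hv)]; simp)
    (fun h => absurd (Finset.mem_univ u) h)] at h
  exact h

lemma stage2 (j : Fin n) (W : Matrix (Fin n → Fin 2) (Fin n → Fin 2) ℂ)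
    (hW : W ∈ Matrix.unitaryGroup (Fin n → Fin 2) ℂ)
    (hdiag : ∀ u v : Fin n → Fin 2, u ≠ v → W u v = 0)
    (heq : (∑ r : Fin n → Fin 2, ∑ s : Fin n → Fin 2, Complex.normSq (Tj n j W r s))
      = 2 ^ (n + 3)) (r : Fin n → Fin 2) :
    W (Function.update r j 0) (Function.update r j 0)
      = W (Function.update r j 1) (Function.update r j 1) := by
  set D : (Fin n → Fin 2) → ℂ := fun r =>
    W (Function.update r j 0) (Function.update r j 0)
      + W (Function.update r j 1) (Function.update r j 1) with hD
  have hT : ∀ r s : Fin n → Fin 2, Tj n j W r s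
      = if Function.update r j 0 = Function.update s j 0 then D r else 0 := by
    intro r s
    unfold Tj
    rw [Fin.sum_univ_two]
    by_cases h : Function.update r j 0 = Function.update s j 0
    · have hs : ∀ a : Fin 2, Function.update s j a = Function.update r j a := by
        intro a
        funext i
        by_cases hi : i = j
        · subst hi; simp
        · have := congrFun h i
          simp only [Function.update_of_ne hi] at this
          simp [Function.update_of_ne hi, this]
      rw [if_pos h, hs 0, hs 1]
    · have hne : ∀ a : Fin 2, Function.update r j a ≠ Function.update s j a := by
        intro a hra
        apply h
        have := congrArg (fun f => Function.update f j 0) hra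
        simpa [Function.update_idem] using this
      rw [if_neg h, hdiag _ _ (hne 0), hdiag _ _ (hne 1), add_zero]
  have hsum : ∑ r : Fin n → Fin 2, Complex.normSq (D r) = 2 ^ (n + 2) := by
    have h1 : ∀ r s : Fin n → Fin 2, Complex.normSq (Tj n j W r s)
        = if Function.update r j 0 = Function.update s j 0 then Complex.normSq (D r) else 0 := by
      intro r s
      rw [hT r s]
      by_cases h : Function.update r j 0 = Function.update s j 0 <;> simp [h]
    rw [Finset.sum_congr rfl (fun r (_ : r ∈ Finset.univ) => Finset.sum_congr rfl
      (fun s (_ : s ∈ Finset.univ) => h1 r s))] at heq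
    have h2 : ∀ r : Fin n → Fin 2, (∑ s : Fin n → Fin 2,
        if Function.update r j 0 = Function.update s j 0 then Complex.normSq (D r) else 0)
        = Complex.normSq (D r) + Complex.normSq (D r) :=
      fun r => L1 j r (fun _ => Complex.normSq (D r))
    rw [Finset.sum_congr rfl (fun r (_ : r ∈ Finset.univ) => h2 r),
      Finset.sum_add_distrib] at heq
    have hpow : (2:ℝ) ^ (n + 3) = 2 ^ (n + 2) + 2 ^ (n + 2) := by ring
    linarith
  have hbound : ∀ r : Fin n → Fin 2, Complex.normSq (D r) ≤ 4 := by
    intro r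
    have := nsq_add_le (W (Function.update r j 0) (Function.update r j 0))
      (W (Function.update r j 1) (Function.update r j 1))
    rw [diag_one W hW hdiag, diag_one W hW hdiag] at this
    rw [hD]
    linarith
  have hall : ∀ r : Fin n → Fin 2, Complex.normSq (D r) = 4 := by
    by_contra hc
    push_neg at hc
    obtain ⟨r0, hr0⟩ := hc
    have hlt : Complex.normSq (D r0) < 4 := lt_of_le_of_ne (hbound r0) hr0
    have : ∑ r : Fin n → Fin 2, Complex.normSq (D r)
        < ∑ _r : Fin n → Fin 2, (4:ℝ) :=
      Finset.sum_lt_sum (fun r _ => hbound r) ⟨r0, Finset.mem_univ r0, hlt⟩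
    rw [hsum, Finset.sum_const, Finset.card_univ] at this
    simp only [Fintype.card_fun, Fintype.card_fin, nsmul_eq_mul] at this
    have h5 : (2:ℝ) ^ (n + 2) < ((2^n : ℕ) : ℝ) * 4 := this
    push_cast at h5
    rw [pow_add] at h5
    linarith
  exact eq_of_nsq _ _ (diag_one W hW hdiag _) (diag_one W hW hdiag _) (hall r)

lemma diag_const (W : Matrix (Fin n → Fin 2) (Fin n → Fin 2) ℂ)
    (hflip : ∀ (j : Fin n) (r : Fin n → Fin 2),
      W (Function.update r j 0) (Function.update r j 0)
        = W (Function.update r j 1) (Function.update r j 1))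
    (r : Fin n → Fin 2) : W r r = W (fun _ => 0) (fun _ => 0) := by
  have key : ∀ k : ℕ, ∀ r : Fin n → Fin 2,
      (Finset.univ.filter (fun i => r i ≠ 0)).card = k → W r r = W (fun _ => 0) (fun _ => 0) := by
    intro k
    induction k using Nat.strong_induction_on with
    | _ k ih =>
      intro r hr
      by_cases h0 : ∀ i, r i = 0
      · have : r = fun _ => 0 := funext h0
        rw [this]
      · push_neg at h0
        obtain ⟨j, hj⟩ := h0
        have hj1 : r j = 1 := by
          have := (by decide : ∀ c : Fin 2, c = 0 ∨ c = 1) (r j)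
          tauto
        have hrup : Function.update r j 1 = r := by
          rw [← hj1]
          exact Function.update_eq_self j r
        have hflipj := hflip j r
        rw [hrup] at hflipj
        have hsub : (Finset.univ.filter (fun i => Function.update r j 0 i ≠ 0))
            ⊂ (Finset.univ.filter (fun i => r i ≠ 0)) := by
          constructor
          · intro i hi
            simp only [Finset.mem_filter, Finset.mem_univ, true_and] at hi ⊢
            by_cases hij : i = j
            · subst hij; simp at hi
            · rwa [Function.update_of_ne hij] at hi
          · intro hcon
            have hjmem : j ∈ (Finset.univ.filter (fun i => r i ≠ 0)) := by
              simp [hj]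
            have := hcon hjmem
            simp at this
        have hcard : (Finset.univ.filter (fun i => Function.update r j 0 i ≠ 0)).card < k := by
          rw [← hr]
          exact Finset.card_lt_card hsub
        rw [← hflipj]
        exact ih _ hcard _ rfl
  exact key _ r rfl

lemma fe_one_of_scalar (hn : 1 ≤ n) (j : Fin n)
    (U V : Matrix (Fin n → Fin 2) (Fin n → Fin 2) ℂ) (d : ℂ)
    (hd : U * Vᴴ = d • (1 : Matrix (Fin n → Fin 2) (Fin n → Fin 2) ℂ))
    (hnsq : Complex.normSq d = 1) : Fe n j U V = 1 := by
  rw [fe_eq hn j U V]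
  have hT : ∀ r s : Fin n → Fin 2, Tj n j (U * Vᴴ) r s
      = if Function.update r j 0 = Function.update s j 0 then d + d else 0 := by
    intro r s
    unfold Tj
    rw [Fin.sum_univ_two, hd]
    by_cases h : Function.update r j 0 = Function.update s j 0
    · have hs : ∀ a : Fin 2, Function.update s j a = Function.update r j a := by
        intro a
        funext i
        by_cases hi : i = j
        · subst hi; simp
        · have := congrFun h i
          simp only [Function.update_of_ne hi] at this
          simp [Function.update_of_ne hi, this]
      rw [if_pos h, hs 0, hs 1]
      simp [Matrix.smul_apply, Matrix.one_apply_eq]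
    · have hne : ∀ a : Fin 2, Function.update r j a ≠ Function.update s j a := by
        intro a hra
        apply h
        have := congrArg (fun f => Function.update f j 0) hra
        simpa [Function.update_idem] using this
      rw [if_neg h]
      simp [Matrix.smul_apply, Matrix.one_apply_ne (hne 0), Matrix.one_apply_ne (hne 1)]
  have hTsq : ∀ r s : Fin n → Fin 2, Complex.normSq (Tj n j (U * Vᴴ) r s)
      = if Function.update r j 0 = Function.update s j 0 then (4:ℝ) else 0 := by
    intro r s
    rw [hT r s]
    by_cases h : Function.update r j 0 = Function.update s j 0
    · rw [if_pos h, if_pos h]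
      have h2 : d + d = 2 * d := by ring
      rw [h2, Complex.normSq_mul, hnsq]
      norm_num [Complex.normSq_apply]
    · rw [if_neg h, if_neg h]
      simp
  rw [Finset.sum_congr rfl (fun r (_ : r ∈ Finset.univ) => Finset.sum_congr rfl
    (fun s (_ : s ∈ Finset.univ) => hTsq r s))]
  rw [Finset.sum_congr rfl (fun r (_ : r ∈ Finset.univ) => L1 j r (fun _ => (4:ℝ)))]
  rw [Finset.sum_const, Finset.card_univ]
  simp only [Fintype.card_fun, Fintype.card_fin, nsmul_eq_mul]
  rw [pow_add]
  push_cast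
  field_simp
  ring


/-- For unitaries `U`, `V` on `n ≥ 1` qubits, the local Hilbert-Schmidt
cost `C_LHST(U,V)` vanishes iff `V = e^{iφ} U` for some real `φ`. -/
theorem stmt1 (n : ℕ) (hn : 1 ≤ n)
    (U V : Matrix (Fin n → Fin 2) (Fin n → Fin 2) ℂ)
    (hU : U ∈ Matrix.unitaryGroup (Fin n → Fin 2) ℂ)
    (hV : V ∈ Matrix.unitaryGroup (Fin n → Fin 2) ℂ) :
    CLHST n U V = 0 ↔ ∃ φ : ℝ, V = Complex.exp (Complex.I * φ) • U := by
  have hVH : Vᴴ ∈ Matrix.unitaryGroup (Fin n → Fin 2) ℂ := by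
    rw [← Matrix.star_eq_conjTranspose]
    exact Unitary.star_mem hV
  have hWmem : U * Vᴴ ∈ Matrix.unitaryGroup (Fin n → Fin 2) ℂ := mul_mem hU hVH
  have hUU' : U * Uᴴ = 1 := by
    have := Matrix.mem_unitaryGroup_iff.mp hU
    rwa [Matrix.star_eq_conjTranspose] at this
  have hUU : Uᴴ * U = 1 := by
    have := Matrix.mem_unitaryGroup_iff'.mp hU
    rwa [Matrix.star_eq_conjTranspose] at this
  constructor
  · intro h
    set W := U * Vᴴ with hWdef
    -- each local cost is nonnegative
    have hfele : ∀ j : Fin n, Fe n j U V ≤ 1 := by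
      intro j
      rw [fe_eq hn j U V]
      have hb := (tbound j W hWmem).1
      calc (1 / 2 ^ (n + 3) : ℝ) * ∑ r : Fin n → Fin 2, ∑ s : Fin n → Fin 2,
            Complex.normSq (Tj n j W r s)
          ≤ (1 / 2 ^ (n + 3) : ℝ) * 2 ^ (n + 3) :=
            mul_le_mul_of_nonneg_left hb (by positivity)
        _ = 1 := by field_simp
    have hjnn : ∀ j ∈ (Finset.univ : Finset (Fin n)), 0 ≤ CLHSTj n j U V := by
      intro j _
      unfold CLHSTj
      linarith [hfele j]
    have hsum0 : ∑ j : Fin n, CLHSTj n j U V = 0 := by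
      unfold CLHST at h
      rcases mul_eq_zero.mp h with h1 | h1
      · exfalso
        have : (n:ℝ) ≠ 0 := by positivity
        simp [this] at h1
      · exact h1
    have hj0 : ∀ j : Fin n, CLHSTj n j U V = 0 := fun j =>
      (Finset.sum_eq_zero_iff_of_nonneg hjnn).mp hsum0 j (Finset.mem_univ j)
    have hfe1 : ∀ j : Fin n, Fe n j U V = 1 := by
      intro j
      have := hj0 j
      unfold CLHSTj at this
      linarith
    have hS : ∀ j : Fin n, (∑ r : Fin n → Fin 2, ∑ s : Fin n → Fin 2,
        Complex.normSq (Tj n j W r s)) = 2 ^ (n + 3) := by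
      intro j
      have := hfe1 j
      rw [fe_eq hn j U V] at this
      have hp : (2:ℝ) ^ (n + 3) ≠ 0 := by positivity
      field_simp at this
      linarith
    have hdiag : ∀ u v : Fin n → Fin 2, u ≠ v → W u v = 0 := by
      intro u v huv
      rw [Function.ne_iff] at huv
      obtain ⟨j, hj⟩ := huv
      exact (tbound j W hWmem).2 (hS j) u v hj
    have hflip : ∀ (j : Fin n) (r : Fin n → Fin 2),
        W (Function.update r j 0) (Function.update r j 0)
          = W (Function.update r j 1) (Function.update r j 1) :=
      fun j r => stage2 j W hWmem hdiag (hS j) r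
    set c := W (fun _ => 0) (fun _ => 0) with hc
    have hdd : ∀ r : Fin n → Fin 2, W r r = c := diag_const W hflip
    have hWc : W = c • (1 : Matrix (Fin n → Fin 2) (Fin n → Fin 2) ℂ) := by
      ext u v
      by_cases huv : u = v
      · subst huv
        simp [Matrix.smul_apply, Matrix.one_apply_eq, hdd u]
      · simp [Matrix.smul_apply, hdiag u v huv, Matrix.one_apply_ne huv]
    have hc1 : Complex.normSq c = 1 := diag_one W hWmem hdiag (fun _ => 0)
    have hV2 : Vᴴ = c • Uᴴ := by
      have h1 := congrArg (fun M => Uᴴ * M) hWc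
      rw [← mul_assoc, hUU, one_mul] at h1
      rw [h1, Matrix.mul_smul, mul_one]
    have hV3 : V = star c • U := by
      have h2 := congrArg Matrix.conjTranspose hV2
      rwa [Matrix.conjTranspose_conjTranspose, Matrix.conjTranspose_smul,
        Matrix.conjTranspose_conjTranspose] at h2
    refine ⟨-(c.arg), ?_⟩
    have habs : ‖c‖ = 1 := by
      have h3 := Complex.sq_norm c
      nlinarith [norm_nonneg c]
    have hcexp : c = Complex.exp ((c.arg : ℂ) * Complex.I) := by
      conv_lhs => rw [← Complex.norm_mul_exp_arg_mul_I c]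
      rw [habs]
      simp
    have hstar : star c = Complex.exp (Complex.I * ((-(c.arg) : ℝ) : ℂ)) := by
      conv_lhs => rw [hcexp]
      have h4 : star (Complex.exp ((c.arg : ℂ) * Complex.I))
          = Complex.exp (star ((c.arg : ℂ) * Complex.I)) := (Complex.exp_conj _).symm
      rw [h4]
      congr 1
      rw [show star ((c.arg : ℂ) * Complex.I) = (starRingEnd ℂ) ((c.arg : ℂ) * Complex.I) from rfl]
      rw [_root_.map_mul, Complex.conj_I, Complex.conj_ofReal]
      push_cast
      ring
    rw [hV3, hstar]
  · rintro ⟨φ, rfl⟩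
    set e := Complex.exp (Complex.I * φ) with he
    have hd : U * (e • U)ᴴ = star e • (1 : Matrix (Fin n → Fin 2) (Fin n → Fin 2) ℂ) := by
      rw [Matrix.conjTranspose_smul, Matrix.mul_smul, hUU']
    have habse : ‖e‖ = 1 := by
      rw [he, Complex.norm_exp]
      simp
    have hnsqe : Complex.normSq (star e) = 1 := by
      rw [show star e = (starRingEnd ℂ) e from rfl, Complex.normSq_conj,
        ← Complex.sq_norm, habse]
      norm_num
    have hfe : ∀ j : Fin n, Fe n j U (e • U) = 1 :=
      fun j => fe_one_of_scalar hn j U (e • U) (star e) hd hnsqe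
    unfold CLHST CLHSTj
    simp [hfe]

end
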